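/- Let X be the block matrix T = [[I + XXᵀ, X],[Xᵀ, I]] for an m×n real matrix X. Then the characteristic polynomial of T satisfies det(tI_{m+n} - T) = det((t-1)²I_n - t XᵀX) · (t-1)^{m-n} when m ≥ n. -/

import Mathlib

open Matrix

lemma aux_swap {k l : ℕ} (a b : ℝ) (ha : a ≠ 0) (Y : Matrix (Fin k) (Fin l) ℝ) :
    a ^ l * (a • (1 : Matrix (Fin k) (Fin k) ℝ) - b • (Y * Yᵀ)).det
      = a ^ k * (a • (1 : Matrix (Fin l) (Fin l) ℝ) - b • (Yᵀ * Y)).det := by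
  have hc : a * (-(b / a)) = -b := by field_simp
  have h1 : a • (1 : Matrix (Fin k) (Fin k) ℝ) - b • (Y * Yᵀ)
      = a • (1 + Y * ((-(b / a)) • Yᵀ)) := by
    rw [Matrix.mul_smul, smul_add, smul_smul, hc, neg_smul, ← sub_eq_add_neg]
  have h2 : a • (1 : Matrix (Fin l) (Fin l) ℝ) - b • (Yᵀ * Y)
      = a • (1 + ((-(b / a)) • Yᵀ) * Y) := by
    rw [Matrix.smul_mul, smul_add, smul_smul, hc, neg_smul, ← sub_eq_add_neg]
  rw [h1, h2, Matrix.det_smul, Matrix.det_smul, Matrix.det_one_add_mul_comm]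
  simp only [Fintype.card_fin]
  ring

theorem stmt_10 (m n : ℕ) (hmn : m ≥ n) (X : Matrix (Fin m) (Fin n) ℝ)
    (T : Matrix (Fin m ⊕ Fin n) (Fin m ⊕ Fin n) ℝ)
    (hT : T = Matrix.fromBlocks (1 + X * Xᵀ) X Xᵀ 1) :
    ∀ t : ℝ,
      (t • (1 : Matrix (Fin m ⊕ Fin n) (Fin m ⊕ Fin n) ℝ) - T).det =
        ((t - 1)^2 • (1 : Matrix (Fin n) (Fin n) ℝ) - t • (Xᵀ * X)).det * (t - 1)^(m - n) := by
  set f : ℝ → ℝ := fun t => (t • (1 : Matrix (Fin m ⊕ Fin n) (Fin m ⊕ Fin n) ℝ) - T).det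
  set g : ℝ → ℝ := fun t =>
    ((t - 1)^2 • (1 : Matrix (Fin n) (Fin n) ℝ) - t • (Xᵀ * X)).det * (t - 1)^(m - n)
  have hf : Continuous f := by
    apply Continuous.matrix_det
    exact (continuous_id.smul continuous_const).sub continuous_const
  have hg : Continuous g := by
    apply Continuous.mul
    · apply Continuous.matrix_det
      apply Continuous.sub
      · exact (((continuous_id.sub continuous_const).pow 2).smul continuous_const)
      · exact continuous_id.smul continuous_const
    · exact (continuous_id.sub continuous_const).pow (m - n)
  have key : ∀ t : ℝ, t ≠ 1 → f t = g t := by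
    intro t ht
    set a : ℝ := t - 1 with ha_def
    have ha : a ≠ 0 := sub_ne_zero.mpr ht
    have hblocks : t • (1 : Matrix (Fin m ⊕ Fin n) (Fin m ⊕ Fin n) ℝ) - T
        = Matrix.fromBlocks (a • 1 - X * Xᵀ) (-X) (-Xᵀ) (a • 1) := by
      have b11 : t • (1 : Matrix (Fin m) (Fin m) ℝ) - (1 + X * Xᵀ) = a • 1 - X * Xᵀ := by
        rw [ha_def, sub_smul, one_smul]; abel
      have b12 : t • (0 : Matrix (Fin m) (Fin n) ℝ) - X = -X := by
        rw [smul_zero, zero_sub]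
      have b21 : t • (0 : Matrix (Fin n) (Fin m) ℝ) - Xᵀ = -Xᵀ := by
        rw [smul_zero, zero_sub]
      have b22 : t • (1 : Matrix (Fin n) (Fin n) ℝ) - 1 = a • 1 := by
        rw [ha_def, sub_smul, one_smul]
      rw [hT, ← Matrix.fromBlocks_one, Matrix.fromBlocks_smul, sub_eq_add_neg,
        Matrix.fromBlocks_neg, Matrix.fromBlocks_add, ← sub_eq_add_neg, ← sub_eq_add_neg,
        ← sub_eq_add_neg, ← sub_eq_add_neg, b11, b12, b21, b22]
    letI : Invertible (a • (1 : Matrix (Fin n) (Fin n) ℝ)) :=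
      ⟨a⁻¹ • (1 : Matrix (Fin n) (Fin n) ℝ),
        by rw [smul_mul_smul_comm, inv_mul_cancel₀ ha, one_smul, Matrix.one_mul],
        by rw [smul_mul_smul_comm, mul_inv_cancel₀ ha, one_smul, Matrix.one_mul]⟩
    have hdet : f t = (a • (1 : Matrix (Fin n) (Fin n) ℝ)).det *
        ((a • 1 - X * Xᵀ) - (-X) * (a⁻¹ • (1 : Matrix (Fin n) (Fin n) ℝ)) * (-Xᵀ)).det := by
      show (t • (1 : Matrix (Fin m ⊕ Fin n) (Fin m ⊕ Fin n) ℝ) - T).det = _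
      rw [hblocks, Matrix.det_fromBlocks₂₂]
      rfl
    have hprod : (-X) * (a⁻¹ • (1 : Matrix (Fin n) (Fin n) ℝ)) * (-Xᵀ)
        = a⁻¹ • (X * Xᵀ) := by
      rw [Matrix.mul_smul, Matrix.mul_one, Matrix.smul_mul, Matrix.neg_mul, Matrix.mul_neg,
        neg_neg]
    have hschur : (a • 1 - X * Xᵀ) - (-X) * (a⁻¹ • (1 : Matrix (Fin n) (Fin n) ℝ)) * (-Xᵀ)
        = a • (1 : Matrix (Fin m) (Fin m) ℝ) - (1 + a⁻¹) • (X * Xᵀ) := by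
      rw [hprod, add_smul, one_smul]
      abel
    have hswap := aux_swap (k := m) (l := n) a (1 + a⁻¹) ha X
    have e2 : t = a * (1 + a⁻¹) := by
      rw [ha_def]; field_simp; ring
    have hfac : (t - 1)^2 • (1 : Matrix (Fin n) (Fin n) ℝ) - t • (Xᵀ * X)
        = a • (a • (1 : Matrix (Fin n) (Fin n) ℝ) - (1 + a⁻¹) • (Xᵀ * X)) := by
      have e1 : (t - 1)^2 = a * a := by rw [ha_def]; ring
      rw [smul_sub, smul_smul, smul_smul, e1, ← e2]
    have hdetfac : ((t - 1)^2 • (1 : Matrix (Fin n) (Fin n) ℝ) - t • (Xᵀ * X)).det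
        = a ^ n * (a • (1 : Matrix (Fin n) (Fin n) ℝ) - (1 + a⁻¹) • (Xᵀ * X)).det := by
      rw [hfac, Matrix.det_smul, Fintype.card_fin]
    have hdetD : (a • (1 : Matrix (Fin n) (Fin n) ℝ)).det = a ^ n := by
      rw [Matrix.det_smul, Fintype.card_fin, Matrix.det_one, mul_one]
    have hpow : a ^ n * a ^ (m - n) = a ^ m := by
      rw [← pow_add, Nat.add_sub_cancel' hmn]
    show f t = ((t - 1)^2 • (1 : Matrix (Fin n) (Fin n) ℝ) - t • (Xᵀ * X)).det * (t - 1)^(m - n)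
    rw [hdet, hschur, hdetD, hswap, hdetfac, ← ha_def]
    calc a ^ m * (a • (1 : Matrix (Fin n) (Fin n) ℝ) - (1 + a⁻¹) • (Xᵀ * X)).det
        = (a ^ n * a ^ (m - n)) *
            (a • (1 : Matrix (Fin n) (Fin n) ℝ) - (1 + a⁻¹) • (Xᵀ * X)).det := by rw [hpow]
      _ = a ^ n * (a • (1 : Matrix (Fin n) (Fin n) ℝ) - (1 + a⁻¹) • (Xᵀ * X)).det
            * a ^ (m - n) := by ring
  intro t
  have : f = g := hf.ext_on (dense_compl_singleton (1 : ℝ)) hg (fun t ht => key t ht)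
  exact congrFun this t
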